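/- Let n, m ≥ 1, let M ∈ GF(2)[x] be a nonzero polynomial with deg M ≤ m, and let c ∈ GF(2)^n. For a monic irreducible polynomial p of degree n with coefficient vector (p_{n-1}, …, p_0), let W_p be the n × n matrix over GF(2) with first row (p_{n-1}, …, p_0), ones just below the diagonal, and zeros elsewhere. If p is chosen uniformly at random from the set of monic irreducible degree-n polynomials in GF(2)[x] and, independently, s is chosen uniformly at random from GF(2)^n, then the probability that M(W_p) · s = c is at most m · 2^{1−n} + 2^{−n}, where M(W_p) is the evaluation of M(x) at the matrix W_p. -/

import Mathlib

open Polynomial Matrix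

/-- The LFSR state-transition matrix `W`: first row `(p_{n-1}, …, p_1, p_0)`,
ones just below the diagonal, zeros elsewhere. -/
def lfsrMatrix {n : ℕ} (p : Fin n → ZMod 2) : Matrix (Fin n) (Fin n) (ZMod 2) :=
  Matrix.of fun i j => if (i : ℕ) = 0 then p j.rev
    else if (i : ℕ) = (j : ℕ) + 1 then 1 else 0


noncomputable abbrev lfsrB (p : Polynomial (ZMod 2)) (n : ℕ) : Matrix (Fin n) (Fin n) (ZMod 2) :=
  (lfsrMatrix fun j : Fin n => p.coeff (j : ℕ))ᵀ

noncomputable def lfsrBasis {n : ℕ} {p : Polynomial (ZMod 2)} (hp : p.Monic)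
    (hd : p.natDegree = n) : Module.Basis (Fin n) (ZMod 2) (AdjoinRoot p) :=
  (AdjoinRoot.powerBasis hp.ne_zero).basis.reindex
    ((finCongr (by rw [AdjoinRoot.powerBasis_dim, hd])).trans Fin.revPerm)

lemma lfsrBasis_apply {n : ℕ} {p : Polynomial (ZMod 2)} (hp : p.Monic)
    (hd : p.natDegree = n) (j : Fin n) :
    lfsrBasis hp hd j = AdjoinRoot.root p ^ ((j.rev : ℕ)) := by
  rw [lfsrBasis, Module.Basis.reindex_apply]
  rw [PowerBasis.basis_eq_pow, AdjoinRoot.powerBasis_gen]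
  simp [finCongr, Fin.revPerm]

noncomputable def lfsrEquiv {n : ℕ} {p : Polynomial (ZMod 2)} (hp : p.Monic)
    (hd : p.natDegree = n) : (Fin n → ZMod 2) ≃ₗ[ZMod 2] AdjoinRoot p :=
  (lfsrBasis hp hd).equivFun.symm

lemma lfsrEquiv_apply {n : ℕ} {p : Polynomial (ZMod 2)} (hp : p.Monic)
    (hd : p.natDegree = n) (v : Fin n → ZMod 2) :
    lfsrEquiv hp hd v = ∑ i : Fin n, v i • AdjoinRoot.root p ^ ((i.rev : ℕ)) := by
  rw [lfsrEquiv, Module.Basis.equivFun_symm_apply]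
  exact Finset.sum_congr rfl fun i _ => by rw [lfsrBasis_apply hp hd]

lemma lfsrEquiv_single {n : ℕ} {p : Polynomial (ZMod 2)} (hp : p.Monic)
    (hd : p.natDegree = n) (j : Fin n) :
    lfsrEquiv hp hd (Pi.single j 1) = AdjoinRoot.root p ^ ((j.rev : ℕ)) := by
  rw [lfsrEquiv_apply hp hd]
  simp [Pi.single_apply]

lemma two_eq_zero_alg {S : Type*} [CommRing S] [Algebra (ZMod 2) S] : (2 : S) = 0 := by
  have h : ((2 : ℕ) : S) = algebraMap (ZMod 2) S ((2 : ℕ) : ZMod 2) := by rw [map_natCast]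
  have h2 : ((2:ℕ) : ZMod 2) = 0 := by decide
  rw [h2, map_zero] at h
  simpa using h

lemma char2_flip {S : Type*} [CommRing S] [Algebra (ZMod 2) S] {a b : S}
    (h : a + b = 0) : a = b := by
  have hb : b + b = 0 := by rw [← two_mul, two_eq_zero_alg, zero_mul]
  rw [eq_neg_of_add_eq_zero_left h, neg_eq_of_add_eq_zero_left hb]

lemma root_pow_n {n : ℕ} {p : Polynomial (ZMod 2)} (hp : p.Monic) (hd : p.natDegree = n) :
    AdjoinRoot.root p ^ n = ∑ k ∈ Finset.range n, p.coeff k • AdjoinRoot.root p ^ k := by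
  have h0 : (Polynomial.aeval (AdjoinRoot.root p)) p = 0 := by
    rw [AdjoinRoot.aeval_eq, AdjoinRoot.mk_self]
  rw [Polynomial.aeval_eq_sum_range, hd, Finset.sum_range_succ] at h0
  have hc : p.coeff n = 1 := by have := hp.coeff_natDegree; rwa [hd] at this
  rw [hc, one_smul, add_comm] at h0
  exact char2_flip h0

lemma lfsrB_mulVec_single {n : ℕ} {p : Polynomial (ZMod 2)} (hp : p.Monic)
    (hd : p.natDegree = n) (j : Fin n) :
    lfsrEquiv hp hd ((lfsrB p n).mulVec (Pi.single j 1))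
      = AdjoinRoot.root p * lfsrEquiv hp hd (Pi.single j 1) := by
  have hn : 0 < n := j.pos
  rw [Matrix.mulVec_single, lfsrEquiv_single]
  rw [show MulOpposite.op (1 : ZMod 2) • (lfsrB p n).col j = fun i => lfsrB p n i j * 1 from by
    funext i; simp]
  rcases Nat.eq_zero_or_pos (j : ℕ) with hj | hj
  · -- column 0 : fun i => coeff (i.rev)
    have hcol : (fun i => lfsrB p n i j * 1) = fun i : Fin n => p.coeff ((i.rev : ℕ)) := by
      funext i
      simp [lfsrB, lfsrMatrix, hj, mul_one]
    rw [hcol, lfsrEquiv_apply hp hd]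
    have hrev : ∑ i : Fin n, p.coeff ((i.rev :ℕ)) • AdjoinRoot.root p ^ ((i.rev : ℕ))
        = ∑ i : Fin n, p.coeff ((i :ℕ)) • AdjoinRoot.root p ^ ((i : ℕ)) :=
      Fintype.sum_equiv Fin.revPerm _ _ (fun i => by simp)
    rw [hrev]
    have hjrev : ((j.rev : ℕ)) = n - 1 := by rw [Fin.val_rev, hj]
    rw [hjrev, ← Finset.sum_range fun k => p.coeff k • AdjoinRoot.root p ^ k,
      ← root_pow_n hp hd, ← pow_succ']
    congr 1
    omega
  · -- column j ≥ 1 : single (j-1)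
    set k : Fin n := ⟨(j : ℕ) - 1, by omega⟩ with hk
    have hkv : (k : ℕ) = (j : ℕ) - 1 := rfl
    have hcol : (fun i : Fin n => lfsrB p n i j * 1)
        = Pi.single (M := fun _ : Fin n => ZMod 2) k 1 := by
      funext i
      rw [Pi.single_apply]
      simp only [lfsrB, lfsrMatrix, Matrix.transpose_apply, Matrix.of_apply, mul_one]
      rw [if_neg (by omega)]
      have hiff : ((j : ℕ) = (i : ℕ) + 1) ↔ (i = k) := by
        rw [Fin.ext_iff, hkv]; omega
      rw [if_congr hiff rfl rfl]
    rw [hcol, lfsrEquiv_single hp hd, ← pow_succ']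
    congr 1
    rw [Fin.val_rev, Fin.val_rev, hkv]
    omega

lemma lfsrB_mulVec {n : ℕ} {p : Polynomial (ZMod 2)} (hp : p.Monic)
    (hd : p.natDegree = n) (v : Fin n → ZMod 2) :
    lfsrEquiv hp hd ((lfsrB p n).mulVec v) = AdjoinRoot.root p * lfsrEquiv hp hd v := by
  have heq : ((lfsrEquiv hp hd).toLinearMap.comp (Matrix.mulVecLin (lfsrB p n)))
      = (LinearMap.mulLeft (ZMod 2) (AdjoinRoot.root p)).comp
          (lfsrEquiv hp hd).toLinearMap := by
    apply LinearMap.pi_ext'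
    intro j
    apply LinearMap.ext_ring
    simp only [LinearMap.comp_apply, LinearMap.coe_single, Matrix.mulVecLin_apply,
      LinearEquiv.coe_coe, LinearMap.mulLeft_apply]
    exact lfsrB_mulVec_single hp hd j
  exact LinearMap.congr_fun heq v

lemma lfsrB_aeval_mulVec {n : ℕ} {p : Polynomial (ZMod 2)} (hp : p.Monic)
    (hd : p.natDegree = n) (q : Polynomial (ZMod 2)) (v : Fin n → ZMod 2) :
    lfsrEquiv hp hd ((Polynomial.aeval (lfsrB p n) q).mulVec v)
      = Polynomial.aeval (AdjoinRoot.root p) q * lfsrEquiv hp hd v := by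
  induction q using Polynomial.induction_on generalizing v with
  | C a =>
      rw [Polynomial.aeval_C, Polynomial.aeval_C, Algebra.algebraMap_eq_smul_one,
        Matrix.smul_mulVec, Matrix.one_mulVec, _root_.map_smul, Algebra.smul_def]
  | add f g hf hg =>
      rw [map_add, Matrix.add_mulVec, map_add, hf, hg, map_add, add_mul]
  | monomial k a ih =>
      rw [pow_succ, ← mul_assoc,
        _root_.map_mul (Polynomial.aeval (lfsrB p n)) (Polynomial.C a * Polynomial.X ^ k) Polynomial.X,
        _root_.map_mul (Polynomial.aeval (AdjoinRoot.root p)) (Polynomial.C a * Polynomial.X ^ k) Polynomial.X,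
        Polynomial.aeval_X, Polynomial.aeval_X, ← Matrix.mulVec_mulVec,
        ih (Matrix.mulVec (lfsrB p n) v), lfsrB_mulVec hp hd, mul_assoc]

lemma lfsrB_aeval_eq_zero {n : ℕ} {p : Polynomial (ZMod 2)} (hp : p.Monic)
    (hd : p.natDegree = n) {q : Polynomial (ZMod 2)} (hq : p ∣ q) :
    Polynomial.aeval (lfsrB p n) q = 0 := by
  have hroot : Polynomial.aeval (AdjoinRoot.root p) q = 0 := by
    rw [AdjoinRoot.aeval_eq, AdjoinRoot.mk_eq_zero.mpr hq]
  ext i j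
  have h := lfsrB_aeval_mulVec hp hd q (Pi.single j 1)
  rw [hroot, zero_mul] at h
  have h0 : (Polynomial.aeval (lfsrB p n) q).mulVec (Pi.single j 1) = 0 := by
    have := (lfsrEquiv hp hd).injective (h.trans (map_zero (lfsrEquiv hp hd)).symm)
    exact this
  have h2 := congrFun h0 i
  simp only [Matrix.mulVec_single, mul_one, Pi.zero_apply] at h2
  simpa using h2

lemma aeval_transpose {n : ℕ} (Amat : Matrix (Fin n) (Fin n) (ZMod 2))
    (q : Polynomial (ZMod 2)) :
    Polynomial.aeval (Amatᵀ) q = (Polynomial.aeval Amat q)ᵀ := by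
  induction q using Polynomial.induction_on with
  | C a =>
      rw [Polynomial.aeval_C, Polynomial.aeval_C, Algebra.algebraMap_eq_smul_one,
        Matrix.transpose_smul, Matrix.transpose_one]
  | add f g hf hg => rw [map_add, map_add, hf, hg, Matrix.transpose_add]
  | monomial k a ih =>
      rw [pow_succ, ← mul_assoc,
        _root_.map_mul (Polynomial.aeval Amatᵀ) (Polynomial.C a * Polynomial.X ^ k) Polynomial.X,
        _root_.map_mul (Polynomial.aeval Amat) (Polynomial.C a * Polynomial.X ^ k) Polynomial.X,
        Polynomial.aeval_X, Polynomial.aeval_X, ih, Matrix.transpose_mul]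
      have e1 : Polynomial.aeval Amat (Polynomial.C a * Polynomial.X ^ k) * Amat
          = Polynomial.aeval Amat ((Polynomial.C a * Polynomial.X ^ k) * Polynomial.X) := by
        rw [_root_.map_mul (Polynomial.aeval Amat) (Polynomial.C a * Polynomial.X ^ k) Polynomial.X,
          Polynomial.aeval_X]
      have e2 : Amat * Polynomial.aeval Amat (Polynomial.C a * Polynomial.X ^ k)
          = Polynomial.aeval Amat (Polynomial.X * (Polynomial.C a * Polynomial.X ^ k)) := by
        rw [_root_.map_mul (Polynomial.aeval Amat) Polynomial.X (Polynomial.C a * Polynomial.X ^ k),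
          Polynomial.aeval_X]
      rw [← Matrix.transpose_mul, ← Matrix.transpose_mul, e1, e2, mul_comm (Polynomial.X)]

/-- If p is monic irreducible of degree n and does not divide M, then `aeval W M` is a unit. -/
lemma lfsr_aeval_isUnit {n : ℕ} {p : Polynomial (ZMod 2)} (hp : p.Monic)
    (hd : p.natDegree = n) (hirr : Irreducible p) {M : Polynomial (ZMod 2)} (hndvd : ¬ p ∣ M) :
    IsUnit (Polynomial.aeval (lfsrMatrix fun j : Fin n => p.coeff (j : ℕ)) M) := by
  have hcop : IsCoprime p M := (hirr.coprime_iff_not_dvd).mpr hndvd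
  obtain ⟨a, b, hab⟩ := hcop
  have h1 : Polynomial.aeval (lfsrB p n) (a * p + b * M) = 1 := by rw [hab, _root_.map_one]
  rw [map_add, _root_.map_mul, _root_.map_mul, lfsrB_aeval_eq_zero hp hd dvd_rfl,
    mul_zero, zero_add] at h1
  have hU : IsUnit (Polynomial.aeval (lfsrB p n) M) :=
    ⟨⟨_, Polynomial.aeval (lfsrB p n) b, mul_eq_one_comm.mp h1, h1⟩, rfl⟩
  have hT : Polynomial.aeval (lfsrMatrix fun j : Fin n => p.coeff (j : ℕ)) M
      = (Polynomial.aeval (lfsrB p n) M)ᵀ := by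
    rw [← aeval_transpose, Matrix.transpose_transpose]
  rw [hT, Matrix.isUnit_iff_isUnit_det, Matrix.det_transpose,
    ← Matrix.isUnit_iff_isUnit_det]
  exact hU

/-- If p divides M then `aeval W M = 0`. -/
lemma lfsr_aeval_eq_zero {n : ℕ} {p : Polynomial (ZMod 2)} (hp : p.Monic)
    (hd : p.natDegree = n) {M : Polynomial (ZMod 2)} (hdvd : p ∣ M) :
    Polynomial.aeval (lfsrMatrix fun j : Fin n => p.coeff (j : ℕ)) M = 0 := by
  have := lfsrB_aeval_eq_zero hp hd hdvd
  have hT : Polynomial.aeval (lfsrMatrix fun j : Fin n => p.coeff (j : ℕ)) M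
      = (Polynomial.aeval (lfsrB p n) M)ᵀ := by
    rw [← aeval_transpose, Matrix.transpose_transpose]
  rw [hT, this, Matrix.transpose_zero]


instance : Subsingleton (Polynomial (ZMod 2))ˣ := by
  constructor
  have h1 : ∀ w : (Polynomial (ZMod 2))ˣ, (w : Polynomial (ZMod 2)) = 1 := by
    intro w
    obtain ⟨r, hr, hc⟩ := Polynomial.isUnit_iff.mp w.isUnit
    have hr1 : r = 1 := by
      have hall : ∀ r : ZMod 2, r ≠ 0 → r = 1 := by decide
      exact hall r hr.ne_zero
    rw [← hc, hr1, Polynomial.C_1]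
  intro u v
  exact Units.ext ((h1 u).trans (h1 v).symm)

/-- Part 2: the number of monic irreducible degree-n divisors of M is at most m/n. -/
lemma card_bad_divisors {n m : ℕ} {M : Polynomial (ZMod 2)} (hM : M ≠ 0)
    (hdeg : M.natDegree ≤ m) (s : Finset (Polynomial (ZMod 2)))
    (hs : ∀ q ∈ s, Irreducible q ∧ q.natDegree = n ∧ q ∣ M) :
    n * s.card ≤ m := by
  have hprod : (∏ q ∈ s, q) ∣ M :=
    Finset.prod_primes_dvd M (fun q hq => (hs q hq).1.prime) (fun q hq => (hs q hq).2.2)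
  have hne : ∀ q ∈ s, q ≠ 0 := fun q hq => (hs q hq).1.ne_zero
  have hdp : (∏ q ∈ s, q).natDegree = ∑ q ∈ s, q.natDegree := Polynomial.natDegree_prod _ _ hne
  have hsum : ∑ q ∈ s, q.natDegree = n * s.card := by
    rw [Finset.sum_congr rfl (fun q hq => (hs q hq).2.1), Finset.sum_const, smul_eq_mul,
      mul_comm]
  calc n * s.card = (∏ q ∈ s, q).natDegree := by rw [hdp, hsum]
    _ ≤ M.natDegree := Polynomial.natDegree_le_of_dvd hprod hM
    _ ≤ m := hdeg

-- Part 3 : lower bound on the number of monic irreducible polynomials of degree n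
lemma sum_Icc_two_pow (k : ℕ) : ∑ d ∈ Finset.Icc 1 k, 2 ^ d = 2 ^ (k + 1) - 2 := by
  induction k with
  | zero => simp
  | succ k ih =>
      rw [Finset.sum_Icc_succ_top (by omega), ih]
      have h1 : 1 ≤ 2 ^ (k + 1) := Nat.one_le_two_pow
      have h2 : (2:ℕ) ^ (k + 2) = 2 ^ (k+1) + 2 ^ (k+1) := by ring
      omega

lemma two_pow_half_le (k : ℕ) (hk : 0 < k) : 2 ^ (k / 2 + 1) ≤ 2 ^ (k - 1) + 2 := by
  rcases Nat.lt_or_ge k 4 with h | h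
  · interval_cases k <;> norm_num
  · have hle : k / 2 + 1 ≤ k - 1 := by omega
    calc (2:ℕ) ^ (k / 2 + 1) ≤ 2 ^ (k - 1) := Nat.pow_le_pow_right (by norm_num) hle
      _ ≤ 2 ^ (k - 1) + 2 := by omega

open IntermediateField in
lemma card_irreducible_lower {n : ℕ} (hn : 0 < n)
    (I : Finset (Polynomial (ZMod 2)))
    (hI : ∀ q : Polynomial (ZMod 2), q.Monic → Irreducible q → q.natDegree = n → q ∈ I) :
    2 ^ (n - 1) ≤ n * I.card := by
  classical
  set K := GaloisField 2 n with hK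
  have hncard : Nat.card K = 2 ^ n := GaloisField.card 2 n hn.ne'
  have hfinK : Finite K := Nat.finite_of_card_ne_zero (by rw [hncard]; positivity)
  have : Fintype K := Fintype.ofFinite K
  have hcardK : Fintype.card K = 2 ^ n := by rw [← Nat.card_eq_fintype_card, hncard]
  have hint : ∀ α : K, IsIntegral (ZMod 2) α := fun α => IsIntegral.of_finite _ _
  have hfr : Module.finrank (ZMod 2) K = n := GaloisField.finrank 2 hn.ne'
  -- degree of minpoly divides n
  have hdvd : ∀ α : K, (minpoly (ZMod 2) α).natDegree ∣ n := by
    intro α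
    have h1 : Module.finrank (ZMod 2) ((ZMod 2)⟮α⟯) = (minpoly (ZMod 2) α).natDegree :=
      IntermediateField.adjoin.finrank (hint α)
    have h2 : Module.finrank (ZMod 2) ((ZMod 2)⟮α⟯) *
        Module.finrank ((ZMod 2)⟮α⟯) K = Module.finrank (ZMod 2) K :=
      Module.finrank_mul_finrank _ _ _
    refine ⟨Module.finrank ((ZMod 2)⟮α⟯) K, ?_⟩
    calc n = Module.finrank (ZMod 2) K := hfr.symm
      _ = Module.finrank (ZMod 2) ((ZMod 2)⟮α⟯) * Module.finrank ((ZMod 2)⟮α⟯) K := h2.symm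
      _ = (minpoly (ZMod 2) α).natDegree * Module.finrank ((ZMod 2)⟮α⟯) K := by rw [h1]
  have hdpos : ∀ α : K, 0 < (minpoly (ZMod 2) α).natDegree :=
    fun α => minpoly.natDegree_pos (hint α)
  -- elements with minpoly degree d satisfy α ^ (2^d) = α
  have hpow : ∀ α : K, α ^ (2 ^ (minpoly (ZMod 2) α).natDegree) = α := by
    intro α
    set E := (ZMod 2)⟮α⟯ with hE
    have : Fintype E := Fintype.ofFinite E
    have hfinE : Module.finrank (ZMod 2) E = (minpoly (ZMod 2) α).natDegree :=
      IntermediateField.adjoin.finrank (hint α)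
    have hcardE : Fintype.card E = 2 ^ (minpoly (ZMod 2) α).natDegree := by
      rw [Module.card_fintype (Module.finBasis (ZMod 2) E), ZMod.card, Fintype.card_fin, hfinE]
    have hβ := FiniteField.pow_card (IntermediateField.AdjoinSimple.gen (ZMod 2) α)
    have h3 := congrArg (algebraMap E K) hβ
    rw [map_pow, hcardE] at h3
    simpa [IntermediateField.AdjoinSimple.algebraMap_gen] using h3
  set f : K → Polynomial (ZMod 2) := fun α => minpoly (ZMod 2) α with hf
  set T : Finset K := Finset.univ.filter (fun α => (f α).natDegree = n) with hT
  -- each fiber of small degree is small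
  have hfilter_le : ∀ d : ℕ, 0 < d →
      (Finset.univ.filter (fun α : K => (f α).natDegree = d)).card ≤ 2 ^ d := by
    intro d hd
    set g : Polynomial K := Polynomial.X ^ (2^d) - Polynomial.X with hg
    have hdeg_g : g.natDegree = 2 ^ d := by
      rw [hg]
      rw [Polynomial.natDegree_sub_eq_left_of_natDegree_lt]
      · exact Polynomial.natDegree_X_pow _
      · rw [Polynomial.natDegree_X_pow, Polynomial.natDegree_X]
        have : 2 ≤ 2 ^ d := by
          calc 2 = 2 ^ 1 := (pow_one 2).symm
          _ ≤ 2 ^ d := Nat.pow_le_pow_right (by norm_num) hd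
        omega
    have hgne : g ≠ 0 := by
      intro h0
      rw [h0, Polynomial.natDegree_zero] at hdeg_g
      have : 0 < 2 ^ d := pow_pos (by norm_num : (0:ℕ) < 2) d
      omega
    have hsub : Finset.univ.filter (fun α : K => (f α).natDegree = d) ⊆ g.roots.toFinset := by
      intro α hα
      simp only [Finset.mem_filter, Finset.mem_univ, true_and] at hα
      rw [Multiset.mem_toFinset, Polynomial.mem_roots hgne]
      have := hpow α
      rw [hα] at this
      simp [hg, Polynomial.IsRoot, this]
    calc (Finset.univ.filter (fun α : K => (f α).natDegree = d)).card
        ≤ g.roots.toFinset.card := Finset.card_le_card hsub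
      _ ≤ Multiset.card g.roots := Multiset.toFinset_card_le _
      _ ≤ g.natDegree := Polynomial.card_roots' g
      _ = 2 ^ d := hdeg_g
  -- bound the bad set
  have hbadsub : Finset.univ.filter (fun α : K => ¬ ((f α).natDegree = n)) ⊆
      n.properDivisors.biUnion
        (fun d => Finset.univ.filter (fun α : K => (f α).natDegree = d)) := by
    intro α hα
    simp only [Finset.mem_filter, Finset.mem_univ, true_and] at hα
    simp only [Finset.mem_biUnion, Nat.mem_properDivisors, Finset.mem_filter,
      Finset.mem_univ, true_and]
    exact ⟨(f α).natDegree, ⟨hdvd α, lt_of_le_of_ne (Nat.le_of_dvd hn (hdvd α)) hα⟩, rfl⟩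
  have hpd_sub : n.properDivisors ⊆ Finset.Icc 1 (n / 2) := by
    intro d hd
    rw [Nat.mem_properDivisors] at hd
    obtain ⟨⟨c, hc⟩, hlt⟩ := hd
    have hd0 : 0 < d := by
      rcases Nat.eq_zero_or_pos d with h | h
      · subst h; simp at hc; omega
      · exact h
    have hc2 : 2 ≤ c := by
      rcases Nat.lt_or_ge c 2 with h | h
      · interval_cases c <;> omega
      · exact h
    have h2d : 2 * d ≤ n := by
      calc 2 * d ≤ c * d := Nat.mul_le_mul_right d hc2
        _ = n := by rw [mul_comm, ← hc]
    rw [Finset.mem_Icc]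
    omega
  have hbad_card : (Finset.univ.filter (fun α : K => ¬ ((f α).natDegree = n))).card
      ≤ 2 ^ (n / 2 + 1) - 2 := by
    calc (Finset.univ.filter (fun α : K => ¬ ((f α).natDegree = n))).card
        ≤ (n.properDivisors.biUnion
            (fun d => Finset.univ.filter (fun α : K => (f α).natDegree = d))).card :=
          Finset.card_le_card hbadsub
      _ ≤ ∑ d ∈ n.properDivisors,
            (Finset.univ.filter (fun α : K => (f α).natDegree = d)).card :=
          Finset.card_biUnion_le
      _ ≤ ∑ d ∈ n.properDivisors, 2 ^ d := by
          apply Finset.sum_le_sum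
          intro d hd
          apply hfilter_le
          rw [Nat.mem_properDivisors] at hd
          rcases Nat.eq_zero_or_pos d with h | h
          · exfalso; obtain ⟨⟨c, hc⟩, _⟩ := hd; subst h; simp at hc; omega
          · exact h
      _ ≤ ∑ d ∈ Finset.Icc 1 (n / 2), 2 ^ d :=
          Finset.sum_le_sum_of_subset hpd_sub
      _ = 2 ^ (n / 2 + 1) - 2 := sum_Icc_two_pow _
  -- lower bound on T
  have hsplit : T.card + (Finset.univ.filter (fun α : K => ¬ ((f α).natDegree = n))).card
      = 2 ^ n := by
    rw [hT, Finset.card_filter_add_card_filter_not, ← hcardK]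
    rfl
  have hTcard : 2 ^ (n - 1) ≤ T.card := by
    have hhalf : 2 ^ n = 2 ^ (n - 1) + 2 ^ (n - 1) := by
      rw [← two_mul, ← pow_succ']
      congr 1
      omega
    have hsmall : 2 ^ (n / 2 + 1) ≤ 2 ^ (n - 1) + 2 := two_pow_half_le n hn
    omega
  -- image in I, fibers of size ≤ n
  have himg : T.image f ⊆ I := by
    intro q hq
    obtain ⟨α, hα, rfl⟩ := Finset.mem_image.mp hq
    rw [hT, Finset.mem_filter] at hα
    exact hI _ (minpoly.monic (hint α)) (minpoly.irreducible (hint α)) hα.2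
  have hfib : ∀ q ∈ T.image f, (T.filter (fun α => f α = q)).card ≤ n := by
    intro q hq
    obtain ⟨α0, hα0, rfl⟩ := Finset.mem_image.mp hq
    rw [hT, Finset.mem_filter] at hα0
    have hqmonic : (f α0).Monic := minpoly.monic (hint α0)
    have hqd : (f α0).natDegree = n := hα0.2
    set φ := algebraMap (ZMod 2) K with hφ
    have hmapne : (f α0).map φ ≠ 0 := (hqmonic.map φ).ne_zero
    have hsub2 : T.filter (fun α => f α = f α0) ⊆ ((f α0).map φ).roots.toFinset := by
      intro α hα
      rw [Finset.mem_filter] at hα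
      rw [Multiset.mem_toFinset, Polynomial.mem_roots hmapne]
      have haev : Polynomial.aeval α (f α) = 0 := minpoly.aeval _ _
      rw [hα.2] at haev
      rw [Polynomial.IsRoot, Polynomial.eval_map, ← Polynomial.aeval_def]
      exact haev
    calc (T.filter (fun α => f α = f α0)).card
        ≤ ((f α0).map φ).roots.toFinset.card := Finset.card_le_card hsub2
      _ ≤ Multiset.card ((f α0).map φ).roots := Multiset.toFinset_card_le _
      _ ≤ ((f α0).map φ).natDegree := Polynomial.card_roots' _
      _ = (f α0).natDegree := hqmonic.natDegree_map φ
      _ = n := hqd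
  calc (2:ℕ) ^ (n - 1) ≤ T.card := hTcard
    _ ≤ n * (T.image f).card := Finset.card_le_mul_card_image T n hfib
    _ ≤ n * I.card := Nat.mul_le_mul_left n (Finset.card_le_card himg)

-- finiteness of sets of polynomials of bounded degree
lemma finite_poly_set {n : ℕ} (S : Set (Polynomial (ZMod 2)))
    (hS : ∀ q ∈ S, q.natDegree ≤ n) : S.Finite := by
  apply Set.Finite.of_finite_image (f := fun q => (fun i : Fin (n+1) => q.coeff (i : ℕ)))
    (Set.toFinite _)
  intro q1 h1 q2 h2 heq
  have hd1 := hS q1 h1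
  have hd2 := hS q2 h2
  ext k
  rcases Nat.lt_or_ge k (n+1) with hk | hk
  · exact congrFun heq ⟨k, hk⟩
  · rw [Polynomial.coeff_eq_zero_of_natDegree_lt (by omega : q1.natDegree < k),
      Polynomial.coeff_eq_zero_of_natDegree_lt (by omega : q2.natDegree < k)]

/-- AXU property of LFSR-based Toeplitz hashing: if `p` is a uniformly random
monic irreducible polynomial of degree `n` over GF(2) and `s` is an independent
uniformly random vector in GF(2)^n, then for any nonzero message polynomial `M`
of degree at most `m` and any target `c`, the probability that `M(W_p)·s = c`
is at most `m·2^(1−n) + 2^(−n)`. The probability is expressed as a counting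
ratio over the pairs `(p, s)`. -/
theorem axu_lfsr_toeplitz (n m : ℕ) (hn : 1 ≤ n) (hm : 1 ≤ m)
    (M : Polynomial (ZMod 2)) (hM : M ≠ 0) (hdeg : M.natDegree ≤ m)
    (c : Fin n → ZMod 2) :
    ({qs : Polynomial (ZMod 2) × (Fin n → ZMod 2) |
        (qs.1.Monic ∧ Irreducible qs.1 ∧ qs.1.natDegree = n) ∧
        (Polynomial.aeval (lfsrMatrix fun j : Fin n => qs.1.coeff (j : ℕ)) M).mulVec qs.2
          = c}.ncard : ℝ) /
      (({q : Polynomial (ZMod 2) |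
          q.Monic ∧ Irreducible q ∧ q.natDegree = n}.ncard : ℝ) * 2 ^ n)
      ≤ (m : ℝ) * 2 ^ ((1 : ℤ) - (n : ℤ)) + 2 ^ (-(n : ℤ)) := by
  classical
  set Iset : Set (Polynomial (ZMod 2)) :=
    {q : Polynomial (ZMod 2) | q.Monic ∧ Irreducible q ∧ q.natDegree = n} with hIset
  set E : Set (Polynomial (ZMod 2) × (Fin n → ZMod 2)) :=
    {qs | (qs.1.Monic ∧ Irreducible qs.1 ∧ qs.1.natDegree = n) ∧
        (Polynomial.aeval (lfsrMatrix fun j : Fin n => qs.1.coeff (j : ℕ)) M).mulVec qs.2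
          = c} with hE
  have hIfin : Iset.Finite := finite_poly_set Iset (fun q hq => le_of_eq hq.2.2)
  have hEfin : E.Finite := by
    apply Set.Finite.subset (hIfin.prod (Set.finite_univ (α := Fin n → ZMod 2)))
    intro qs hqs
    exact ⟨hqs.1, Set.mem_univ _⟩
  set N := Iset.ncard with hN
  -- part 3 : 2^(n-1) ≤ n * N
  have hNlow : 2 ^ (n - 1) ≤ n * N := by
    have h := card_irreducible_lower hn (hIfin.toFinset)
      (fun q h1 h2 h3 => hIfin.mem_toFinset.mpr ⟨h1, h2, h3⟩)
    rw [hN, Set.ncard_eq_toFinset_card Iset hIfin]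
    exact h
  have hNpos : 0 < N := by
    have h1 : 0 < 2 ^ (n - 1) := pow_pos (by norm_num : (0:ℕ) < 2) _
    by_contra h
    push_neg at h
    interval_cases N <;> omega
  -- split into good and bad parts
  set Dbad : Set (Polynomial (ZMod 2)) := {q ∈ Iset | q ∣ M} with hDbad
  have hDfin : Dbad.Finite := hIfin.subset (fun q hq => hq.1)
  set b := Dbad.ncard with hb
  set Egood : Set (Polynomial (ZMod 2) × (Fin n → ZMod 2)) := {qs ∈ E | ¬ qs.1 ∣ M}
    with hEgood
  have hEsub : E ⊆ Egood ∪ Dbad ×ˢ (Set.univ : Set (Fin n → ZMod 2)) := by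
    intro qs hqs
    by_cases hdvd : qs.1 ∣ M
    · exact Or.inr ⟨⟨hqs.1, hdvd⟩, Set.mem_univ _⟩
    · exact Or.inl ⟨hqs, hdvd⟩
  -- card of bad part
  have hbadcard : (Dbad ×ˢ (Set.univ : Set (Fin n → ZMod 2))).ncard = b * 2 ^ n := by
    rw [← Nat.card_coe_set_eq, Nat.card_congr (Equiv.Set.prod _ _), Nat.card_prod,
      Nat.card_coe_set_eq, Nat.card_coe_set_eq, Set.ncard_univ, hb]
    congr 1
    rw [Nat.card_eq_fintype_card]
    rw [show (2:ℕ) ^ n = Fintype.card (ZMod 2) ^ Fintype.card (Fin n) by simp [ZMod.card]]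
    exact Fintype.card_fun
  -- card of good part
  have hgoodcard : Egood.ncard ≤ N := by
    have hinj : Set.InjOn Prod.fst Egood := by
      rintro ⟨q1, s1⟩ h1 ⟨q2, s2⟩ h2 heq
      simp only at heq
      subst heq
      have hq := h1.1.1
      have hunit := lfsr_aeval_isUnit hq.1 hq.2.2 hq.2.1 h1.2
      set A := Polynomial.aeval (lfsrMatrix fun j : Fin n => q1.coeff (j : ℕ)) M with hA
      obtain ⟨u, hu⟩ := hunit
      set B := ((u⁻¹ : (Matrix (Fin n) (Fin n) (ZMod 2))ˣ) : Matrix (Fin n) (Fin n) (ZMod 2))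
        with hB
      have hinv : B * A = 1 := by rw [hB, ← hu]; exact u.inv_mul
      have heq2 : A.mulVec s1 = A.mulVec s2 := by
        have e1 : A.mulVec s1 = c := h1.1.2
        have e2 : A.mulVec s2 = c := h2.1.2
        rw [e1, e2]
      have hss : s1 = s2 := by
        calc s1 = (B * A).mulVec s1 := by rw [hinv, Matrix.one_mulVec]
          _ = B.mulVec (A.mulVec s1) := (Matrix.mulVec_mulVec s1 B A).symm
          _ = B.mulVec (A.mulVec s2) := by rw [heq2]
          _ = (B * A).mulVec s2 := Matrix.mulVec_mulVec s2 B A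
          _ = s2 := by rw [hinv, Matrix.one_mulVec]
      rw [hss]
    calc Egood.ncard = (Prod.fst '' Egood).ncard := (Set.ncard_image_of_injOn hinj).symm
      _ ≤ N := by
          apply Set.ncard_le_ncard _ hIfin
          rintro q ⟨⟨q', s⟩, hq', rfl⟩
          exact hq'.1.1
  -- part 2 : n * b ≤ m
  have hbad_le : n * b ≤ m := by
    have := card_bad_divisors hM hdeg hDfin.toFinset
      (fun q hq => by
        have hq' := hDfin.mem_toFinset.mp hq
        exact ⟨hq'.1.2.1, hq'.1.2.2, hq'.2⟩)
    rwa [← Set.ncard_eq_toFinset_card Dbad hDfin] at this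
  -- total count
  have hEcard : E.ncard ≤ (2 * m + 1) * N := by
    have h1 : E.ncard ≤ Egood.ncard + (Dbad ×ˢ (Set.univ : Set (Fin n → ZMod 2))).ncard := by
      calc E.ncard ≤ (Egood ∪ Dbad ×ˢ (Set.univ : Set (Fin n → ZMod 2))).ncard :=
            Set.ncard_le_ncard hEsub ((hEfin.subset (fun qs h => h.1)).union
              (hDfin.prod Set.finite_univ))
        _ ≤ _ := Set.ncard_union_le _ _
    rw [hbadcard] at h1
    have h2 : b * 2 ^ n ≤ 2 * m * N := by
      have h3 : 2 ^ n = 2 * 2 ^ (n - 1) := by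
        rw [← pow_succ']
        congr 1
        omega
      calc b * 2 ^ n = 2 * (b * 2 ^ (n - 1)) := by rw [h3]; ring
        _ ≤ 2 * (b * (n * N)) := by
            apply Nat.mul_le_mul_left
            exact Nat.mul_le_mul_left b hNlow
        _ = 2 * ((n * b) * N) := by ring
        _ ≤ 2 * (m * N) := by
            apply Nat.mul_le_mul_left
            exact Nat.mul_le_mul_right N hbad_le
        _ = 2 * m * N := by ring
    calc E.ncard ≤ Egood.ncard + b * 2 ^ n := h1
      _ ≤ N + 2 * m * N := Nat.add_le_add hgoodcard h2
      _ = (2 * m + 1) * N := by ring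
  -- final real arithmetic
  have h2npos : (0:ℝ) < 2 ^ n := by positivity
  have hNposR : (0:ℝ) < N := by exact_mod_cast hNpos
  have hrw : (m : ℝ) * 2 ^ ((1 : ℤ) - (n : ℤ)) + 2 ^ (-(n : ℤ))
      = (2 * m + 1) / 2 ^ n := by
    have e1 : (2:ℝ) ^ ((1 : ℤ) - (n : ℤ)) = 2 / 2 ^ n := by
      rw [zpow_sub₀ (by norm_num : (2:ℝ) ≠ 0), zpow_one, zpow_natCast]
    have e2 : (2:ℝ) ^ (-(n : ℤ)) = 1 / 2 ^ n := by
      rw [_root_.zpow_neg, zpow_natCast, one_div]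
    rw [e1, e2]
    field_simp
  rw [hrw]
  rw [div_le_div_iff₀ (by positivity) h2npos]
  have hcast : (E.ncard : ℝ) ≤ ((2 * m + 1) * N : ℕ) := by exact_mod_cast hEcard
  calc (E.ncard : ℝ) * 2 ^ n ≤ (((2 * m + 1) * N : ℕ) : ℝ) * 2 ^ n := by
        apply mul_le_mul_of_nonneg_right hcast (le_of_lt h2npos)
    _ = (2 * ↑m + 1) * (↑N * 2 ^ n) := by push_cast; ring
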